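/- arXiv:2407.08361 — 2 statements merged into one kernel-verified Lean document; each statement's English description precedes it below -/
import Mathlib

section
/- Let s : [0,∞) → ℝⁿ be a continuously differentiable trajectory with s(0) = x₀ and s(t) → 0 as t → ∞, such that Γ₁ := ∫₀^∞ ṡ(t) s(t)ᵀ dt and Γ₂ := ∫₀^∞ s(t) s(t)ᵀ dt converge and Γ₂ is positive definite. Then with Â := Γ₁Γ₂⁻¹, the symmetric matrix ÂΓ₂ + Γ₂Âᵀ = −x₀x₀ᵀ is negative semidefinite. -/
open Matrix MeasureTheory Filter

theorem lyapunov_identity_from_trajectory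
    {n : ℕ} (s s' : ℝ → Fin n → ℝ) (x₀ : Fin n → ℝ)
    (hderiv : ∀ t : ℝ, HasDerivAt s (s' t) t)
    (hs0 : s 0 = x₀)
    (hlim : Tendsto s atTop (nhds 0))
    (Γ₁ Γ₂ : Matrix (Fin n) (Fin n) ℝ)
    (hΓ₁ : ∀ i j, Γ₁ i j = ∫ t in Set.Ici (0:ℝ), s' t i * s t j)
    (hΓ₂ : ∀ i j, Γ₂ i j = ∫ t in Set.Ici (0:ℝ), s t i * s t j)
    (hint₁ : ∀ i j, IntegrableOn (fun t => s' t i * s t j) (Set.Ici (0:ℝ)))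
    (hint₂ : ∀ i j, IntegrableOn (fun t => s t i * s t j) (Set.Ici (0:ℝ)))
    (hpd : Γ₂.PosDef) :
    (Γ₁ * Γ₂⁻¹) * Γ₂ + Γ₂ * (Γ₁ * Γ₂⁻¹)ᵀ = -(vecMulVec x₀ x₀) ∧
    (-((Γ₁ * Γ₂⁻¹) * Γ₂ + Γ₂ * (Γ₁ * Γ₂⁻¹)ᵀ)).PosSemidef := by
  have hdcoord : ∀ (i : Fin n) (t : ℝ), HasDerivAt (fun u => s u i) (s' t i) t := by
    intro i t
    exact (hasDerivAt_pi.1 (hderiv t)) i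
  have hlimc : ∀ i : Fin n, Tendsto (fun t => s t i) atTop (nhds 0) := by
    intro i
    have := tendsto_pi_nhds.1 hlim i
    simpa using this
  -- key pointwise identity
  have key : ∀ i j, Γ₁ i j + Γ₁ j i = -(x₀ i * x₀ j) := by
    intro i j
    have hd : ∀ t ∈ Set.Ici (0:ℝ),
        HasDerivAt (fun u => s u i * s u j) (s' t i * s t j + s t i * s' t j) t := by
      intro t _
      exact (hdcoord i t).mul (hdcoord j t)
    have hint : IntegrableOn (fun t => s' t i * s t j + s t i * s' t j) (Set.Ioi (0:ℝ)) := by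
      apply IntegrableOn.mono_set _ Set.Ioi_subset_Ici_self
      exact (hint₁ i j).add ((hint₁ j i).congr_fun (fun t _ => mul_comm _ _) measurableSet_Ici)
    have htend : Tendsto (fun t => s t i * s t j) atTop (nhds 0) := by
      simpa using (hlimc i).mul (hlimc j)
    have hftc := integral_Ioi_of_hasDerivAt_of_tendsto' hd hint htend
    rw [zero_sub, hs0] at hftc
    have h1 : Γ₁ i j + Γ₁ j i
        = ∫ t in Set.Ici (0:ℝ), (s' t i * s t j + s t i * s' t j) := by
      have h2 : (∫ t in Set.Ici (0:ℝ), s' t j * s t i)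
          = ∫ t in Set.Ici (0:ℝ), s t i * s' t j := by
        simp_rw [mul_comm]
      rw [hΓ₁ i j, hΓ₁ j i, h2, ← integral_add (hint₁ i j)
        ((hint₁ j i).congr_fun (fun t _ => mul_comm _ _) measurableSet_Ici)]
    rw [h1, MeasureTheory.integral_Ici_eq_integral_Ioi]
    exact hftc
  have hsym : Γ₂ᵀ = Γ₂ := by
    ext i j
    rw [transpose_apply, hΓ₂ i j, hΓ₂ j i]
    congr 1
    ext t
    ring
  have hdet : IsUnit Γ₂.det := isUnit_iff_ne_zero.2 (ne_of_gt hpd.det_pos)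
  have hinvT : Γ₂⁻¹ᵀ = Γ₂⁻¹ := by rw [transpose_nonsing_inv, hsym]
  have hmain : (Γ₁ * Γ₂⁻¹) * Γ₂ + Γ₂ * (Γ₁ * Γ₂⁻¹)ᵀ = Γ₁ + Γ₁ᵀ := by
    rw [transpose_mul, hinvT, ← mul_assoc, Matrix.mul_nonsing_inv _ hdet,
      Matrix.nonsing_inv_mul_cancel_right _ _ hdet, one_mul]
  have heq : (Γ₁ * Γ₂⁻¹) * Γ₂ + Γ₂ * (Γ₁ * Γ₂⁻¹)ᵀ = -(vecMulVec x₀ x₀) := by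
    rw [hmain]
    ext i j
    simp only [Matrix.add_apply, transpose_apply, Matrix.neg_apply, vecMulVec_apply]
    exact key i j
  refine ⟨heq, ?_⟩
  rw [heq, neg_neg]
  rw [posSemidef_iff_dotProduct_mulVec]
  constructor
  · ext i j
    simp [vecMulVec_apply, mul_comm]
  · intro v
    have h : (star v) ⬝ᵥ (vecMulVec x₀ x₀ *ᵥ v) = (x₀ ⬝ᵥ v) * (x₀ ⬝ᵥ v) := by
      simp only [dotProduct, mulVec, vecMulVec_apply, Pi.star_apply, star_trivial]
      rw [Finset.sum_mul_sum]
      simp only [Finset.mul_sum]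
      refine Finset.sum_congr rfl fun i _ => Finset.sum_congr rfl fun j _ => by ring
    rw [h]
    exact mul_self_nonneg _
end

section
/- Let Â be an n×n real matrix, P ≻ 0 a positive definite matrix, and x₀ ∈ ℝⁿ such that ÂP + PÂᵀ = −x₀x₀ᵀ. If the pair (Âᵀ, x₀ᵀ) is observable (i.e., the only vector v satisfying x₀ᵀ(Âᵀ)^k v = 0 for all k = 0,…,n−1 is v = 0), then Â is Hurwitz: every eigenvalue of Â has strictly negative real part. -/
open Matrix Complex

private def cvec {n : ℕ} (x : Fin n → ℝ) : Fin n → ℂ := fun i => (x i : ℂ)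

lemma cmap_mulVec {n : ℕ} (M : Matrix (Fin n) (Fin n) ℝ) (y : Fin n → ℝ) :
    (M.map (Complex.ofReal ·)) *ᵥ (cvec y) = cvec (M *ᵥ y) := by
  funext i
  exact (RingHom.map_mulVec Complex.ofRealHom M y i).symm

lemma cdot {n : ℕ} (x y : Fin n → ℝ) :
    cvec x ⬝ᵥ cvec y = ((x ⬝ᵥ y : ℝ) : ℂ) := by
  exact (RingHom.map_dotProduct Complex.ofRealHom x y).symm

lemma cmap_mul {n : ℕ} (M N : Matrix (Fin n) (Fin n) ℝ) :
    (M * N).map (Complex.ofReal ·) = M.map (Complex.ofReal ·) * N.map (Complex.ofReal ·) :=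
  Matrix.map_mul (f := Complex.ofRealHom)

lemma cmap_pow {n : ℕ} (M : Matrix (Fin n) (Fin n) ℝ) (k : ℕ) :
    (M ^ k).map (Complex.ofReal ·) = (M.map (Complex.ofReal ·)) ^ k := by
  have := map_pow (Complex.ofRealHom.mapMatrix (m := Fin n)) M k
  exact this

theorem hurwitz_of_observable
    {n : ℕ} (Ahat P : Matrix (Fin n) (Fin n) ℝ) (x₀ : Fin n → ℝ)
    (hP : P.PosDef)
    (hLyap : Ahat * P + P * Ahatᵀ = -(vecMulVec x₀ x₀))
    (hobs : ∀ v : Fin n → ℝ,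
      (∀ k : ℕ, k < n → x₀ ⬝ᵥ ((Ahatᵀ) ^ k).mulVec v = 0) → v = 0) :
    ∀ μ ∈ spectrum ℂ (Ahat.map (Complex.ofReal ·)), μ.re < 0 := by
  intro μ hμ
  set A : Matrix (Fin n) (Fin n) ℂ := Ahat.map (Complex.ofReal ·) with hAdef
  set Pc : Matrix (Fin n) (Fin n) ℂ := P.map (Complex.ofReal ·) with hPcdef
  -- obtain an eigenvector of Aᵀ
  have hdet : (μ • (1 : Matrix (Fin n) (Fin n) ℂ) - A)ᵀ.det = 0 := by
    rw [Matrix.det_transpose]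
    by_contra h
    rw [spectrum.mem_iff] at hμ
    apply hμ
    have hu : IsUnit (μ • (1 : Matrix (Fin n) (Fin n) ℂ) - A) :=
      (Matrix.isUnit_iff_isUnit_det _).mpr (isUnit_iff_ne_zero.mpr h)
    simpa [Algebra.algebraMap_eq_smul_one] using hu
  obtain ⟨v, hv0, hv⟩ := Matrix.exists_mulVec_eq_zero_iff.mpr hdet
  have heig : Aᵀ *ᵥ v = μ • v := by
    have h1 : μ • v - Aᵀ *ᵥ v = 0 := by
      have := hv
      rw [Matrix.transpose_sub, Matrix.sub_mulVec, Matrix.transpose_smul,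
        Matrix.transpose_one, Matrix.smul_mulVec, Matrix.one_mulVec] at this
      exact this
    exact (sub_eq_zero.mp h1).symm
  have hAH : Aᴴ = Aᵀ := by
    ext i j
    simp [Matrix.conjTranspose_apply, hAdef, Matrix.map_apply, Complex.conj_ofReal]
  -- decompose v into real and imaginary parts
  set a : Fin n → ℝ := fun i => (v i).re with hadef
  set b : Fin n → ℝ := fun i => (v i).im with hbdef
  have hvsplit : v = cvec a + Complex.I • cvec b := by
    funext i
    simp [cvec, hadef, hbdef, Complex.ext_iff]
  have hstarv : star v = cvec a - Complex.I • cvec b := by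
    funext i
    simp [cvec, hadef, hbdef, Complex.ext_iff]
  -- the quadratic form of P at v
  set p : ℂ := star v ⬝ᵥ Pc *ᵥ v with hpdef
  set r : ℝ := a ⬝ᵥ P *ᵥ a + b ⬝ᵥ P *ᵥ b with hrdef
  have hsymm : ∀ x y : Fin n → ℝ, x ⬝ᵥ P *ᵥ y = y ⬝ᵥ P *ᵥ x := by
    intro x y
    have hPt : Pᵀ = P := by
      ext i j
      simpa using (congrFun (congrFun hP.1.eq i) j)
    rw [Matrix.dotProduct_mulVec, ← Matrix.mulVec_transpose, hPt, dotProduct_comm]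
  have hpr : p = (r : ℂ) := by
    rw [hpdef, hstarv, hvsplit, Matrix.mulVec_add, Matrix.mulVec_smul, cmap_mulVec, cmap_mulVec]
    simp only [sub_dotProduct, dotProduct_add, smul_dotProduct,
      dotProduct_smul, cdot, smul_eq_mul]
    rw [hsymm b a, hrdef]
    push_cast
    linear_combination (-(((b ⬝ᵥ P *ᵥ b : ℝ)) : ℂ)) * Complex.I_mul_I
  -- complexified Lyapunov equation
  set cx : Fin n → ℂ := cvec x₀ with hcxdef
  set c : ℂ := cx ⬝ᵥ v with hcdef
  have hvmv : (vecMulVec x₀ x₀).map (Complex.ofReal ·) = vecMulVec cx cx := by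
    ext i j
    simp [Matrix.vecMulVec_apply, Matrix.map_apply, hcxdef, cvec]
  have hAt : Ahatᵀ.map (Complex.ofReal ·) = Aᵀ := Matrix.transpose_map
  have hLyapC : A * Pc + Pc * Aᵀ = -(vecMulVec cx cx) := by
    ext i j
    have h : (Ahat * P + P * Ahatᵀ) i j = (-(vecMulVec x₀ x₀)) i j := by rw [hLyap]
    simp only [Matrix.add_apply, Matrix.mul_apply, Matrix.neg_apply, Matrix.vecMulVec_apply,
      Matrix.transpose_apply] at h ⊢
    simp only [hAdef, hPcdef, hcxdef, cvec, Matrix.map_apply]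
    exact_mod_cast congrArg (Complex.ofReal) h
  -- the key scalar identity
  have h1 : star v ⬝ᵥ ((A * Pc) *ᵥ v) = (starRingEnd ℂ) μ * p := by
    rw [← Matrix.mulVec_mulVec, Matrix.dotProduct_mulVec]
    have hvA : star v ᵥ* A = (starRingEnd ℂ) μ • star v := by
      have := Matrix.star_mulVec (M := Aᴴ) (v := v)
      rw [Matrix.conjTranspose_conjTranspose, hAH, heig] at this
      rw [← this, star_smul]
      rfl
    rw [hvA, smul_dotProduct, smul_eq_mul, hpdef]
  have h2 : star v ⬝ᵥ ((Pc * Aᵀ) *ᵥ v) = μ * p := by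
    rw [← Matrix.mulVec_mulVec, heig, Matrix.mulVec_smul, dotProduct_smul, smul_eq_mul, hpdef]
  have h3 : star v ⬝ᵥ ((-(vecMulVec cx cx)) *ᵥ v) = -((starRingEnd ℂ) c * c) := by
    have hmv : (vecMulVec cx cx) *ᵥ v = c • cx := by
      funext i
      simp only [Matrix.mulVec, Matrix.vecMulVec_apply, dotProduct, hcdef,
        Pi.smul_apply, smul_eq_mul, Finset.mul_sum]
      rw [Finset.sum_mul]
      exact Finset.sum_congr rfl fun j _ => by ring
    have hstcx : star cx = cx := by
      funext i
      simp [hcxdef, cvec, Complex.conj_ofReal]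
    have hsc : star v ⬝ᵥ cx = (starRingEnd ℂ) c := by
      rw [Matrix.star_dotProduct, hstcx, ← hcdef]
      rfl
    rw [Matrix.neg_mulVec, dotProduct_neg, hmv, dotProduct_smul, smul_eq_mul, hsc,
      mul_comm]
  have hkey : ((starRingEnd ℂ) μ + μ) * p = -((starRingEnd ℂ) c * c) := by
    have := congrArg (fun M : Matrix (Fin n) (Fin n) ℂ => star v ⬝ᵥ (M *ᵥ v)) hLyapC
    simp only [Matrix.add_mulVec, dotProduct_add] at this
    rw [h1, h2, h3] at this
    rw [add_mul]
    exact this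
  -- pass to real numbers
  have hreal : 2 * μ.re * r = -(Complex.normSq c) := by
    have hc : (starRingEnd ℂ) c * c = ((Complex.normSq c : ℝ) : ℂ) := by
      rw [mul_comm]; exact Complex.mul_conj c
    have hμ2 : (starRingEnd ℂ) μ + μ = ((2 * μ.re : ℝ) : ℂ) := by
      rw [add_comm]; exact Complex.add_conj μ
    rw [hμ2, hpr, hc, ← Complex.ofReal_mul, ← Complex.ofReal_neg] at hkey
    exact_mod_cast hkey
  -- positivity of r
  have hab : ¬(a = 0 ∧ b = 0) := by
    rintro ⟨ha, hb⟩
    apply hv0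
    rw [hvsplit, ha, hb]
    funext i
    simp [cvec]
  have hsemi : ∀ x : Fin n → ℝ, 0 ≤ x ⬝ᵥ P *ᵥ x := by
    intro x
    by_cases hx : x = 0
    · simp [hx]
    · have := hP.dotProduct_mulVec_pos hx
      simpa using this.le
  have hposd : ∀ x : Fin n → ℝ, x ≠ 0 → 0 < x ⬝ᵥ P *ᵥ x := by
    intro x hx
    have := hP.dotProduct_mulVec_pos hx
    simpa using this
  have hr0 : 0 < r := by
    rcases not_and_or.mp hab with ha | hb
    · have := hposd a ha
      have := hsemi b
      rw [hrdef]; linarith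
    · have := hposd b hb
      have := hsemi a
      rw [hrdef]; linarith
  -- μ.re ≤ 0
  have hle : μ.re ≤ 0 := by
    nlinarith [Complex.normSq_nonneg c, hreal, hr0]
  rcases lt_or_eq_of_le hle with h | h
  · exact h
  -- the boundary case contradicts observability
  exfalso
  have hc0 : c = 0 := by
    have : Complex.normSq c = 0 := by nlinarith [hreal]
    exact Complex.normSq_eq_zero.mp this
  have hpow : ∀ k : ℕ, Aᵀ ^ k *ᵥ v = μ ^ k • v := by
    intro k
    induction k with
    | zero => simp
    | succ k ih =>
      rw [pow_succ, ← Matrix.mulVec_mulVec, heig, Matrix.mulVec_smul, ih,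
        smul_smul, ← pow_succ']
  have hdotk : ∀ k : ℕ, cx ⬝ᵥ (((Ahatᵀ ^ k).map (Complex.ofReal ·)) *ᵥ v) = 0 := by
    intro k
    rw [cmap_pow, hAt, hpow k, dotProduct_smul, ← hcdef, hc0, smul_zero]
  have hreim : ∀ k : ℕ, x₀ ⬝ᵥ (Ahatᵀ ^ k) *ᵥ a = 0 ∧ x₀ ⬝ᵥ (Ahatᵀ ^ k) *ᵥ b = 0 := by
    intro k
    have := hdotk k
    rw [hvsplit, Matrix.mulVec_add, Matrix.mulVec_smul, dotProduct_add,
      dotProduct_smul, cmap_mulVec, cmap_mulVec] at this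
    rw [hcxdef, cdot, cdot, smul_eq_mul] at this
    constructor
    · have := congrArg Complex.re this
      simpa using this
    · have := congrArg Complex.im this
      simpa using this
  have ha0 : a = 0 := hobs a fun k _ => (hreim k).1
  have hb0 : b = 0 := hobs b fun k _ => (hreim k).2
  exact hab ⟨ha0, hb0⟩
end
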